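/- Let D = {q ∈ ℂ : 0 < |q| < 1}, and for q ∈ D set L(q) = log(1/|q|), C(q) = (1/(4q)) ( π²/L(q)² − 1 ), and ρ(q) = i π³ / (2 |q|² L(q)³). Then C is real-differentiable on D (viewing ℂ as ℝ² with q = u + iv), its Wirtinger derivative satisfies ∂̄C(q) = ½(∂C/∂u + i ∂C/∂v)(q) = π² / (4 |q|² L(q)³) for all q ∈ D, and consequently the Poisson bracket of q and C(q) with respect to the two-form ω = ρ(q) dq ∧ dq̄, namely {q, C} := ρ(q)⁻¹ · ∂̄C(q), equals 1/(2πi) at every point of D. -/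

import Mathlib

open Real

/-- The antiholomorphic Wirtinger derivative `∂̄f = ½(∂f/∂u + i ∂f/∂v)` of a
function `f : ℂ → ℂ`, viewed via the real Fréchet derivative. -/
noncomputable def wirtingerBar (f : ℂ → ℂ) (q : ℂ) : ℂ :=
  (1 / 2) * (fderiv ℝ f q 1 + Complex.I * fderiv ℝ f q Complex.I)

/-- `L(q) = log(1/|q|)`. -/
noncomputable def Lmod (q : ℂ) : ℝ := Real.log (1 / ‖q‖)

/-- The accessory parameter `C(q) = (1/(4q))(π²/L(q)² − 1)`. -/
noncomputable def accC (q : ℂ) : ℂ :=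
  (1 / (4 * q)) * (((π : ℂ) ^ 2 / (Lmod q : ℂ) ^ 2) - 1)

/-- The density `ρ(q) = i π³ / (2 |q|² L(q)³)` of the Weil–Petersson form
`ω = ρ(q) dq ∧ dq̄`. -/
noncomputable def wpDensity (q : ℂ) : ℂ :=
  Complex.I * (π : ℂ) ^ 3 / (2 * (‖q‖ : ℂ) ^ 2 * (Lmod q : ℂ) ^ 3)

/-- A smooth model for `accC` away from `0`. -/
noncomputable def accC' (q : ℂ) : ℂ :=
  (1 / (4 * q)) *
    Complex.ofReal (π ^ 2 / (-(1 / 2) * Real.log (Complex.normSq q)) ^ 2 - 1)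

lemma Lmod_eq (q : ℂ) (hq : q ≠ 0) :
    Lmod q = -(1 / 2) * Real.log (Complex.normSq q) := by
  have ha : ‖q‖ ≠ 0 := by simpa using hq
  have : Complex.normSq q = ‖q‖ ^ 2 := (Complex.sq_norm q).symm
  rw [Lmod, this, Real.log_pow, one_div, Real.log_inv]
  ring

lemma accC_eq_accC' (q : ℂ) (hq : q ≠ 0) : accC q = accC' q := by
  rw [accC, accC', ← Lmod_eq q hq]
  push_cast
  ring

/-- The explicit real Fréchet derivative of `accC'` at `q ≠ 0`. -/
noncomputable def accCDeriv (q : ℂ) : ℂ →L[ℝ] ℂ :=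
  ((1 / (4 * q)) •
      (Complex.ofRealCLM.comp
        ((π ^ 2 * (-(2 * (-(1 / 2) * Real.log (Complex.normSq q))) /
            ((-(1 / 2) * Real.log (Complex.normSq q)) ^ 2) ^ 2)) •
          ((-(1 / 2) : ℝ) • ((Complex.normSq q)⁻¹ •
            ((2 * q.re) • Complex.reCLM + (2 * q.im) • Complex.imCLM)))))) +
    ((((1 / (4 * q)) ^ 2 * -4 : ℂ) •
        (ContinuousLinearMap.restrictScalars ℝ
          (ContinuousLinearMap.id ℂ ℂ))).smulRight
      (Complex.ofReal (π ^ 2 / (-(1 / 2) * Real.log (Complex.normSq q)) ^ 2 - 1)))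

lemma hasFDerivAt_accC' (q : ℂ) (hq : q ≠ 0) (hL : -(1/2) * Real.log (Complex.normSq q) ≠ 0) :
    HasFDerivAt accC' (accCDeriv q) q := by
  have hs : Complex.normSq q ≠ 0 := by simpa [Complex.normSq_eq_zero] using hq
  -- derivative of normSq
  have hN : HasFDerivAt Complex.normSq
      ((2 * q.re) • Complex.reCLM + (2 * q.im) • Complex.imCLM) q := by
    have h1 : HasFDerivAt (fun z : ℂ => z.re * z.re + z.im * z.im)
        ((q.re • Complex.reCLM + q.re • Complex.reCLM) +
          (q.im • Complex.imCLM + q.im • Complex.imCLM)) q :=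
      (Complex.reCLM.hasFDerivAt.mul Complex.reCLM.hasFDerivAt).add
        (Complex.imCLM.hasFDerivAt.mul Complex.imCLM.hasFDerivAt)
    have : (fun z : ℂ => z.re * z.re + z.im * z.im) = Complex.normSq := by
      funext z; simp [Complex.normSq_apply]
    rw [this] at h1
    convert h1 using 1
    ext z <;> simp <;> ring
  -- derivative of L(z) = -(1/2) log (normSq z)
  have hlog : HasDerivAt Real.log (Complex.normSq q)⁻¹ (Complex.normSq q) :=
    Real.hasDerivAt_log hs
  have hLog : HasFDerivAt (fun z : ℂ => Real.log (Complex.normSq z))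
      ((Complex.normSq q)⁻¹ • ((2 * q.re) • Complex.reCLM + (2 * q.im) • Complex.imCLM)) q :=
    hlog.comp_hasFDerivAt q hN
  have hl : HasFDerivAt (fun z : ℂ => -(1/2) * Real.log (Complex.normSq z))
      ((-(1/2) : ℝ) • ((Complex.normSq q)⁻¹ •
        ((2 * q.re) • Complex.reCLM + (2 * q.im) • Complex.imCLM))) q :=
    hLog.const_mul (-(1/2) : ℝ)
  -- derivative of φ(x) = π²/x² - 1 at L
  set L : ℝ := -(1/2) * Real.log (Complex.normSq q) with hLdef
  have hφ : HasDerivAt (fun x : ℝ => π ^ 2 / x ^ 2 - 1)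
      (π ^ 2 * (-(2 * L) / (L ^ 2) ^ 2)) L := by
    have h2 : HasDerivAt (fun x : ℝ => x ^ 2) (2 * L) L := by
      simpa using hasDerivAt_pow 2 L
    have hinv := h2.inv (pow_ne_zero 2 hL)
    have := (hinv.const_mul (π ^ 2)).sub_const 1
    simpa [div_eq_mul_inv] using this
  have hcomp : HasFDerivAt
      (fun z : ℂ => π ^ 2 / (-(1/2) * Real.log (Complex.normSq z)) ^ 2 - 1)
      ((π ^ 2 * (-(2 * L) / (L ^ 2) ^ 2)) •
        ((-(1/2) : ℝ) • ((Complex.normSq q)⁻¹ •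
          ((2 * q.re) • Complex.reCLM + (2 * q.im) • Complex.imCLM)))) q := by
    have hφ' : HasDerivAt (fun x : ℝ => π ^ 2 / x ^ 2 - 1)
        (π ^ 2 * (-(2 * L) / (L ^ 2) ^ 2)) (-(1/2) * Real.log (Complex.normSq q)) := hφ
    exact hφ'.comp_hasFDerivAt q hl
  have hr : HasFDerivAt
      (fun z : ℂ => (Complex.ofReal (π ^ 2 / (-(1/2) * Real.log (Complex.normSq z)) ^ 2 - 1)))
      (Complex.ofRealCLM.comp
        ((π ^ 2 * (-(2 * L) / (L ^ 2) ^ 2)) •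
          ((-(1/2) : ℝ) • ((Complex.normSq q)⁻¹ •
            ((2 * q.re) • Complex.reCLM + (2 * q.im) • Complex.imCLM))))) q :=
    Complex.ofRealCLM.hasFDerivAt.comp q hcomp
  -- derivative of c(z) = 1/(4z)
  have hc' : HasDerivAt (fun z : ℂ => 1 / (4 * z)) ((1 / (4 * q)) ^ 2 * -4) q := by
    have h4 : HasDerivAt (fun z : ℂ => 4 * z) 4 q := by
      simpa using (hasDerivAt_id q).const_mul (4 : ℂ)
    have := h4.inv (by simpa using hq)
    simp only [one_div]
    rw [show (4 * q)⁻¹ ^ 2 * -4 = -4 / (4 * q) ^ 2 by ring]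
    exact this
  have hc : HasFDerivAt (fun z : ℂ => 1 / (4 * z))
      ((((1 / (4 * q)) ^ 2 * -4 : ℂ)) •
        (ContinuousLinearMap.restrictScalars ℝ (ContinuousLinearMap.id ℂ ℂ))) q := by
    have := (hc'.hasFDerivAt).restrictScalars ℝ
    have h2 : (((1 / (4 * q)) ^ 2 * -4 : ℂ)) •
        (ContinuousLinearMap.restrictScalars ℝ (ContinuousLinearMap.id ℂ ℂ)) =
        ContinuousLinearMap.restrictScalars ℝ
          (ContinuousLinearMap.toSpanSingleton ℂ ((1 / (4 * q)) ^ 2 * -4)) := by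
      ext z
      simp [mul_comm]
    rw [h2]
    exact this
  -- product
  have hmul := hc.mul' hr
  have hval : (1 : ℂ) / (4 * q) = (fun z : ℂ => 1 / (4 * z)) q := rfl
  exact hmul

lemma alg (x y a l p q i : ℂ) (hq : q ≠ 0) (ha : a ≠ 0) (hl : l ≠ 0)
    (hxy : x + y * i = q) (hI : i ^ 2 = -1) :
    1 / 2 *
      (1 / (4 * q) *
            (p ^ 2 * (-(2 * l) / (l ^ 2) ^ 2) *
              (-(1 / 2) * ((a ^ 2)⁻¹ * (2 * x * 1 + 2 * y * 0)))) +
          (1 / (4 * q)) ^ 2 * -4 * 1 * (p ^ 2 / l ^ 2 - 1) +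
        i *
          (1 / (4 * q) *
              (p ^ 2 * (-(2 * l) / (l ^ 2) ^ 2) *
                (-(1 / 2) * ((a ^ 2)⁻¹ * (2 * x * 0 + 2 * y * 1)))) +
            (1 / (4 * q)) ^ 2 * -4 * i * (p ^ 2 / l ^ 2 - 1))) =
    p ^ 2 / (4 * a ^ 2 * l ^ 3) := by
  have e1 : -(2*l)/(l^2)^2 = -2/l^3 := by
    rw [div_eq_div_iff (pow_ne_zero _ (pow_ne_zero _ hl)) (pow_ne_zero _ hl)]
    ring
  rw [e1]
  have hA : q⁻¹ * q = 1 := inv_mul_cancel₀ hq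
  have hB : l⁻¹ * l = 1 := inv_mul_cancel₀ hl
  have hC : a⁻¹ * a = 1 := inv_mul_cancel₀ ha
  linear_combination
    (1 / (4 * q) * p ^ 2 / (l ^ 3 * a ^ 2)) * hxy
    + (p ^ 2 / (4 * l ^ 3 * a ^ 2)) * hA
    + (1 / 2 * (1 / (4 * q)) ^ 2 * (-4) * (p ^ 2 / l ^ 2 - 1)) * hI

/-- On the punctured unit disc, the accessory parameter `C` is real-differentiable,
its Wirtinger derivative is `∂̄C(q) = π²/(4|q|² L(q)³)`, and consequently the
Poisson bracket `{q, C} = ρ(q)⁻¹ ∂̄C(q)` with respect to `ω = ρ dq ∧ dq̄`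
equals `1/(2πi)`. -/
theorem accessory_poisson_bracket :
    ∀ q : ℂ, 0 < ‖q‖ → ‖q‖ < 1 →
      DifferentiableAt ℝ accC q ∧
      wirtingerBar accC q =
        ((π ^ 2 / (4 * ‖q‖ ^ 2 * Lmod q ^ 3) : ℝ) : ℂ) ∧
      (wpDensity q)⁻¹ * wirtingerBar accC q = 1 / (2 * π * Complex.I) := by
  intro q h0 h1
  have hq : q ≠ 0 := by
    intro h; rw [h] at h0; simp at h0
  have hLpos : 0 < Lmod q := Real.log_pos (by rw [lt_div_iff₀ h0]; simpa using h1)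
  have hLne : Lmod q ≠ 0 := hLpos.ne'
  have hL0 : -(1/2) * Real.log (Complex.normSq q) = Lmod q := (Lmod_eq q hq).symm
  have hF : HasFDerivAt accC (accCDeriv q) q := by
    refine (hasFDerivAt_accC' q hq (by rw [hL0]; exact hLne)).congr_of_eventuallyEq ?_
    filter_upwards [isOpen_compl_singleton.mem_nhds (by simpa using hq)] with z hz
    exact accC_eq_accC' z (by simpa using hz)
  have hwb : wirtingerBar accC q =
      (1/2) * (accCDeriv q 1 + Complex.I * accCDeriv q Complex.I) := by
    rw [wirtingerBar, hF.fderiv]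
  have key : wirtingerBar accC q =
      ((π ^ 2 / (4 * ‖q‖ ^ 2 * Lmod q ^ 3) : ℝ) : ℂ) := by
    rw [hwb, accCDeriv]
    simp only [ContinuousLinearMap.add_apply, ContinuousLinearMap.smul_apply,
      ContinuousLinearMap.comp_apply, ContinuousLinearMap.smulRight_apply,
      ContinuousLinearMap.coe_restrictScalars', ContinuousLinearMap.coe_id', id_eq,
      Complex.ofRealCLM_apply, Complex.reCLM_apply, Complex.imCLM_apply,
      Complex.one_re, Complex.one_im, Complex.I_re, Complex.I_im, smul_eq_mul,
      Complex.real_smul]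
    rw [hL0, ← Complex.sq_norm q]
    push_cast
    have hxy : (q.re : ℂ) + (q.im : ℂ) * Complex.I = q := Complex.re_add_im q
    have ha : (‖q‖ : ℂ) ≠ 0 := Complex.ofReal_ne_zero.mpr h0.ne'
    have hl : ((Lmod q : ℝ) : ℂ) ≠ 0 := Complex.ofReal_ne_zero.mpr hLne
    exact alg _ _ _ _ _ q Complex.I hq ha hl hxy Complex.I_sq
  refine ⟨hF.differentiableAt, key, ?_⟩
  rw [key, wpDensity]
  have ha : (‖q‖ : ℂ) ≠ 0 := Complex.ofReal_ne_zero.mpr h0.ne'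
  have hl : ((Lmod q : ℝ) : ℂ) ≠ 0 := Complex.ofReal_ne_zero.mpr hLne
  have hπ : (π : ℂ) ≠ 0 := Complex.ofReal_ne_zero.mpr Real.pi_ne_zero
  have hI : Complex.I ≠ 0 := Complex.I_ne_zero
  push_cast
  rw [inv_div, div_mul_div_comm, div_eq_div_iff
    (mul_ne_zero (mul_ne_zero hI (pow_ne_zero _ hπ))
      (mul_ne_zero (mul_ne_zero (by norm_num : (4:ℂ) ≠ 0) (pow_ne_zero _ ha)) (pow_ne_zero _ hl)))
    (mul_ne_zero (mul_ne_zero (by norm_num : (2:ℂ) ≠ 0) hπ) hI)]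
  ring
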